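/- For a trace-free symmetric two-tensor T on an m-dimensional real inner product space (m ≥ 2), the trace of T³ satisfies tr(T³) ≤ ((m-2)/√(m(m-1))) |T|³, where |T| denotes the Frobenius norm of T. -/

import Mathlib

open Finset

/-- Scalar Okumura inequality. -/
lemma okumura_scalar (m : ℕ) (hm : 2 ≤ m) (a : Fin m → ℝ) (hsum : ∑ i, a i = 0) :
    ∑ i, (a i) ^ 3 ≤ (((m : ℝ) - 2) / Real.sqrt ((m : ℝ) * ((m : ℝ) - 1))) *
      Real.sqrt (∑ i, (a i) ^ 2) ^ 3 := by
  have hm2 : (2 : ℝ) ≤ (m : ℝ) := by exact_mod_cast hm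
  have hmpos : (0 : ℝ) < m := by linarith
  have hm1 : (0 : ℝ) < (m : ℝ) - 1 := by linarith
  have hmm : (0 : ℝ) < (m : ℝ) * ((m : ℝ) - 1) := by positivity
  set q : ℝ := ∑ i, (a i) ^ 2 with hq
  have hq0 : 0 ≤ q := Finset.sum_nonneg fun i _ => sq_nonneg _
  set t : ℝ := Real.sqrt (q / ((m : ℝ) * ((m : ℝ) - 1))) with ht
  have ht0 : 0 ≤ t := Real.sqrt_nonneg _
  have ht2 : (m : ℝ) * ((m : ℝ) - 1) * t ^ 2 = q := by
    rw [ht, Real.sq_sqrt (by positivity)]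
    field_simp
  -- each a i ≤ (m-1) * t
  have hbound : ∀ i, a i ≤ ((m : ℝ) - 1) * t := by
    intro i
    have h1 : a i = -∑ j ∈ univ.erase i, a j := by
      have h := Finset.sum_erase_eq_sub (f := a) (mem_univ i)
      rw [hsum] at h; linarith
    have h2 : (a i) ^ 2 ≤ ((m : ℝ) - 1) * (q - (a i) ^ 2) := by
      have hcs := sq_sum_le_card_mul_sum_sq (s := univ.erase i) (f := a)
      have hcard : (#(univ.erase i) : ℝ) = (m : ℝ) - 1 := by
        rw [Finset.card_erase_of_mem (mem_univ i)]
        simp [Fintype.card_fin]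
        have : 1 ≤ m := by omega
        push_cast [Nat.cast_sub this]
        ring
      have hqerase : ∑ j ∈ univ.erase i, (a j) ^ 2 = q - (a i) ^ 2 :=
        Finset.sum_erase_eq_sub (f := fun j => (a j) ^ 2) (mem_univ i)
      calc (a i) ^ 2 = (∑ j ∈ univ.erase i, a j) ^ 2 := by rw [h1]; ring
        _ ≤ (#(univ.erase i) : ℝ) * ∑ j ∈ univ.erase i, (a j) ^ 2 := by
            exact_mod_cast hcs
        _ = ((m : ℝ) - 1) * (q - (a i) ^ 2) := by rw [hcard, hqerase]
    have h3 : (a i) ^ 2 ≤ (((m : ℝ) - 1) * t) ^ 2 := by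
      nlinarith [ht2]
    have h4 : 0 ≤ ((m : ℝ) - 1) * t := by positivity
    nlinarith [h3, h4]
  -- key sum
  have hkey : ∑ i, (a i) ^ 3 ≤ ((m : ℝ) - 2) * t * q := by
    have hterm : ∀ i ∈ univ, (a i + t) ^ 2 * (a i - ((m : ℝ) - 1) * t) ≤ 0 :=
      fun i _ => mul_nonpos_of_nonneg_of_nonpos (sq_nonneg _) (by linarith [hbound i])
    have hS : ∑ i, (a i + t) ^ 2 * (a i - ((m : ℝ) - 1) * t) ≤ 0 :=
      Finset.sum_nonpos hterm
    have hexp : ∑ i, (a i + t) ^ 2 * (a i - ((m : ℝ) - 1) * t)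
        = ∑ i, (a i) ^ 3 + (3 - (m : ℝ)) * t * q
          - (m : ℝ) * ((m : ℝ) - 1) * t ^ 3 := by
      have : ∀ i, (a i + t) ^ 2 * (a i - ((m : ℝ) - 1) * t)
          = (a i) ^ 3 + (3 - (m : ℝ)) * t * (a i) ^ 2
            + (3 - 2 * (m : ℝ)) * t ^ 2 * (a i) - ((m : ℝ) - 1) * t ^ 3 := by
        intro i; ring
      simp_rw [this]
      simp only [Finset.sum_sub_distrib, Finset.sum_add_distrib, ← Finset.mul_sum,
        Finset.sum_const, Finset.card_univ, Fintype.card_fin, nsmul_eq_mul]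
      rw [← hq, hsum]
      ring
    have : (m : ℝ) * ((m : ℝ) - 1) * t ^ 3 = t * q := by
      rw [← ht2]; ring
    nlinarith [hS, hexp]
  -- convert RHS
  have hrhs : ((m : ℝ) - 2) * t * q
      = (((m : ℝ) - 2) / Real.sqrt ((m : ℝ) * ((m : ℝ) - 1))) * Real.sqrt q ^ 3 := by
    have hsq : Real.sqrt ((m : ℝ) * ((m : ℝ) - 1)) > 0 := Real.sqrt_pos.mpr hmm
    have h1 : t = Real.sqrt q / Real.sqrt ((m : ℝ) * ((m : ℝ) - 1)) := by
      rw [ht, Real.sqrt_div hq0]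
    rw [h1, pow_succ, Real.sq_sqrt hq0]
    ring
  linarith [hkey, hrhs.ge, hrhs.le]

lemma trace_eq_sum_of_eigen {V : Type*} [NormedAddCommGroup V] [InnerProductSpace ℝ V]
    [FiniteDimensional ℝ V] {m : ℕ} (B : Module.Basis (Fin m) ℝ V) (T : V →ₗ[ℝ] V)
    (μ : Fin m → ℝ) (h : ∀ i, T (B i) = μ i • B i) :
    LinearMap.trace ℝ V T = ∑ i, μ i := by
  rw [LinearMap.trace_eq_matrix_trace ℝ B, Matrix.trace]
  simp [LinearMap.toMatrix_apply, h, Matrix.diag, Finsupp.single_apply]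

/-- For a trace-free self-adjoint operator `T` on an `m`-dimensional real inner product
space (`m ≥ 2`), one has `tr(T³) ≤ ((m-2)/√(m(m-1))) |T|³` where `|T| = √(tr T²)`. -/
theorem stmt0 {V : Type*} [NormedAddCommGroup V] [InnerProductSpace ℝ V]
    [FiniteDimensional ℝ V] (m : ℕ) (hm : 2 ≤ m) (hdim : Module.finrank ℝ V = m)
    (T : V →ₗ[ℝ] V) (hT : LinearMap.IsSymmetric T)
    (htr : LinearMap.trace ℝ V T = 0) :
    LinearMap.trace ℝ V (T ∘ₗ T ∘ₗ T) ≤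
      (((m : ℝ) - 2) / Real.sqrt ((m : ℝ) * ((m : ℝ) - 1))) *
        Real.sqrt (LinearMap.trace ℝ V (T ∘ₗ T)) ^ 3 := by
  set B := (hT.eigenvectorBasis hdim).toBasis with hBdef
  set μ := hT.eigenvalues hdim with hμdef
  have hB : ∀ i, T (B i) = μ i • B i := fun i => by
    simp [hBdef, hμdef, hT.apply_eigenvectorBasis]
  have hB2 : ∀ i, (T ∘ₗ T) (B i) = (μ i) ^ 2 • B i := fun i => by
    simp [LinearMap.comp_apply, hB, map_smul, smul_smul, pow_two]
  have hB3 : ∀ i, (T ∘ₗ T ∘ₗ T) (B i) = (μ i) ^ 3 • B i := fun i => by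
    simp [LinearMap.comp_apply, hB, map_smul, smul_smul, pow_succ, pow_two, mul_assoc]
  rw [trace_eq_sum_of_eigen B _ _ hB3, trace_eq_sum_of_eigen B _ _ hB2]
  have hsum : ∑ i, μ i = 0 := by
    rw [← trace_eq_sum_of_eigen B T μ hB]; exact htr
  exact okumura_scalar m hm μ hsum
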